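/- Let σ > 0, y ∈ ℝⁿ, and let S be any real n×n matrix. Set K := I + σ·y·ᵀy (an n×n symmetric positive definite matrix). Then for all u ∈ ℝ and a, b ∈ ℝⁿ the following identity of quadratic forms holds: σu² − 2σu·⟨y, a⟩ + ᵀa·K·a + ᵀb·(I + ᵀS·S)·b − 2·ᵀb·ᵀS·a = ᵀw·K·w + (σ/(1 + σ‖y‖²))·(u − ᵀy·S·b)² + ‖b‖², where w := a − σu·K⁻¹·y − K⁻¹·S·b. -/

import Mathlib

open Matrix

private lemma vmv_mulVec {n : ℕ} (y x : Fin n → ℝ) :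
    vecMulVec y y *ᵥ x = (y ⬝ᵥ x) • y := by
  funext i
  simp only [mulVec, dotProduct, vecMulVec_apply, Pi.smul_apply, smul_eq_mul,
    Finset.sum_mul]
  exact Finset.sum_congr rfl fun j _ => by ring

/-- Let `σ > 0`, `y ∈ ℝⁿ`, `S` any real `n×n` matrix and
`K := I + σ·y·ᵀy`.  Then `K` is symmetric positive definite and for all `u ∈ ℝ`,
`a, b ∈ ℝⁿ` the completion-of-square identity
`σu² − 2σu⟨y,a⟩ + ᵀa·K·a + ᵀb·(I + ᵀS·S)·b − 2·ᵀb·ᵀS·a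
  = ᵀw·K·w + (σ/(1+σ‖y‖²))·(u − ᵀy·S·b)² + ‖b‖²`
holds, where `w := a − σu·K⁻¹·y − K⁻¹·S·b`. -/
theorem completion_of_square_connection_metric
    {n : ℕ} (σ : ℝ) (hσ : 0 < σ) (y : Fin n → ℝ) (S : Matrix (Fin n) (Fin n) ℝ)
    (K : Matrix (Fin n) (Fin n) ℝ) (hK : K = 1 + σ • vecMulVec y y) :
    K.PosDef ∧
    ∀ (u : ℝ) (a b : Fin n → ℝ) (w : Fin n → ℝ),
      w = a - (σ * u) • (K⁻¹ *ᵥ y) - K⁻¹ *ᵥ (S *ᵥ b) →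
      σ * u ^ 2 - 2 * σ * u * (y ⬝ᵥ a) + a ⬝ᵥ K *ᵥ a
          + b ⬝ᵥ (1 + Sᵀ * S) *ᵥ b - 2 * (b ⬝ᵥ Sᵀ *ᵥ a)
        = w ⬝ᵥ K *ᵥ w
          + σ / (1 + σ * (y ⬝ᵥ y)) * (u - y ⬝ᵥ (S *ᵥ b)) ^ 2
          + b ⬝ᵥ b := by
  -- K acts as x ↦ x + σ⟨y,x⟩y
  have hKx : ∀ x : Fin n → ℝ, K *ᵥ x = x + (σ * (y ⬝ᵥ x)) • y := by
    intro x
    rw [hK, add_mulVec, one_mulVec, smul_mulVec, vmv_mulVec, smul_smul]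
  -- quadratic form of K
  have hKq : ∀ v x : Fin n → ℝ, v ⬝ᵥ K *ᵥ x = v ⬝ᵥ x + σ * (y ⬝ᵥ x) * (v ⬝ᵥ y) := by
    intro v x
    rw [hKx, dotProduct_add, dotProduct_smul, smul_eq_mul]
  have hy : (0:ℝ) ≤ y ⬝ᵥ y := by
    apply Finset.sum_nonneg; intro i _; exact mul_self_nonneg _
  have hc : (0:ℝ) < 1 + σ * (y ⬝ᵥ y) := by positivity
  have hc' : (1 + σ * (y ⬝ᵥ y)) ≠ 0 := hc.ne'
  -- positive definiteness
  have hherm : K.IsHermitian := by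
    rw [hK]
    refine IsHermitian.add isHermitian_one ?_
    show (σ • vecMulVec y y)ᴴ = σ • vecMulVec y y
    ext i j
    simp [vecMulVec_apply, mul_comm]
  have hpd : K.PosDef := by
    refine PosDef.of_dotProduct_mulVec_pos hherm fun x hx => ?_
    have : star x = x := by simp
    rw [this, hKq]
    have h1 : 0 < x ⬝ᵥ x := by
      simpa using (dotProduct_star_self_pos_iff (v := x)).mpr hx
    have h2 : (0:ℝ) ≤ σ * (y ⬝ᵥ x) * (x ⬝ᵥ y) := by
      rw [dotProduct_comm x y, mul_assoc]
      exact mul_nonneg hσ.le (mul_self_nonneg _)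
    linarith
  refine ⟨hpd, ?_⟩
  intro u a b w hw
  have hinv : K⁻¹ * K = 1 := nonsing_inv_mul K hpd.det_pos.ne'.isUnit
  have hKinv : ∀ x t : Fin n → ℝ, K *ᵥ t = x → K⁻¹ *ᵥ x = t := by
    intro x t h; rw [← h, mulVec_mulVec, hinv, one_mulVec]
  set c := 1 + σ * (y ⬝ᵥ y) with hcdef
  have hy1 : K⁻¹ *ᵥ y = (1 / c) • y := by
    apply hKinv
    rw [hKx, dotProduct_smul, smul_eq_mul]
    match_scalars <;> field_simp <;> try ring
  set sb := S *ᵥ b with hsbdef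
  have hsb : K⁻¹ *ᵥ sb = sb - (σ * (y ⬝ᵥ sb) / c) • y := by
    apply hKinv
    rw [hKx, dotProduct_sub, dotProduct_smul, smul_eq_mul]
    match_scalars <;> field_simp <;> try ring
  have hw' : w = a - sb + ((σ * (y ⬝ᵥ sb) - σ * u) / c) • y := by
    rw [hw, hy1, hsb]
    match_scalars <;> field_simp <;> try ring
  have hbt : ∀ v, b ⬝ᵥ Sᵀ *ᵥ v = sb ⬝ᵥ v := by
    intro v; rw [dotProduct_mulVec, vecMul_transpose, hsbdef]
  have hb1 : b ⬝ᵥ (1 + Sᵀ * S) *ᵥ b = b ⬝ᵥ b + sb ⬝ᵥ sb := by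
    rw [add_mulVec, one_mulVec, dotProduct_add, ← mulVec_mulVec, hbt]
  rw [hw', hb1, hbt]
  simp only [hKq, dotProduct_add, dotProduct_sub, add_dotProduct, sub_dotProduct,
    smul_dotProduct, dotProduct_smul, smul_eq_mul]
  rw [dotProduct_comm a y, dotProduct_comm sb y, dotProduct_comm sb a]
  field_simp
  ring
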